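/- Let (A, Ã) be a dual pair of closed densely defined operators on a complex Hilbert space H with the common core property (common core D), with A dissipative, and let V := ((A − Ã)/(2i))↾_D be its imaginary part. Let W_F = V_F^{1/2} and W_K = V_K^{1/2} be the square roots of the Friedrichs and Kreĭn–von Neumann extensions of V, and write V_F = W_F∘W_F. Let 𝒱 ⊆ D(Ã*) with 𝒱 ∩ D(A) = {0} and L : 𝒱 → H linear, and assume that for every v ∈ 𝒱 there is φ_v ∈ D(V_F) with Lv = V_F φ_v. Then the extension A_{𝒱,L} (domain D(A) ∔ 𝒱, acting as f + v ↦ Ã*(f+v) + Lv) is dissipative if and only if 𝒱 ⊆ D(W_K) and for every v ∈ 𝒱: Im⟨v, Ã*v⟩ + Im⟨v, V_F φ_v⟩ ≥ (1/4)‖W_K(φ_v + 2iv)‖². -/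

import Mathlib

noncomputable section

open Complex

variable {H : Type*} [NormedAddCommGroup H] [InnerProductSpace ℂ H] [CompleteSpace H]

local notation "⟪" x ", " y "⟫" => @inner ℂ _ _ x y

/-- A partially defined operator is *dissipative* if `Im ⟪ψ, A ψ⟫ ≥ 0` for all `ψ` in its
domain. -/
def Dissipative (A : H →ₗ.[ℂ] H) : Prop :=
  ∀ ψ : A.domain, 0 ≤ (⟪(ψ : H), A ψ⟫).im

/-- A partially defined operator is *symmetric* if `⟪f, S g⟫ = ⟪S f, g⟫` on its domain. -/
def IsSymmetricP (S : H →ₗ.[ℂ] H) : Prop :=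
  ∀ f g : S.domain, ⟪(f : H), S g⟫ = ⟪S f, (g : H)⟫

/-- A partially defined operator is *non-negative* if `⟪f, V f⟫` is real and `≥ 0` on its
domain. -/
def NonnegP (V : H →ₗ.[ℂ] H) : Prop :=
  ∀ f : V.domain, (⟪(f : H), V f⟫).im = 0 ∧ 0 ≤ (⟪(f : H), V f⟫).re

/-- `T = W ∘ W` as partially defined operators: the domain of `T` is
`{x ∈ D(W) : W x ∈ D(W)}` and there `T x = W (W x)`. -/
def IsSqrtOf (W T : H →ₗ.[ℂ] H) : Prop :=
  (∀ x : H, x ∈ T.domain ↔ ∃ hx : x ∈ W.domain, W ⟨x, hx⟩ ∈ W.domain) ∧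
  ∀ (x : H) (hxT : x ∈ T.domain) (hxW : x ∈ W.domain) (hWx : W ⟨x, hxW⟩ ∈ W.domain),
    T ⟨x, hxT⟩ = W ⟨W ⟨x, hxW⟩, hWx⟩

/-- The Ando–Nishio supremum `sup { |⟪h, V f⟫|² / ⟪f, V f⟫ : f ∈ D(V), V f ≠ 0 }`,
computed in `[0, ∞]`. -/
def anSup (V : H →ₗ.[ℂ] H) (h : H) : ENNReal :=
  ⨆ f : {f : V.domain // V f ≠ 0},
    ENNReal.ofReal (‖⟪h, V f.1⟫‖ ^ 2) / ENNReal.ofReal ((⟪(f.1 : H), V f.1⟫).re)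

/-- `W` is the square root of the Friedrichs extension of `V`: `W` is a non-negative
selfadjoint operator, `W ∘ W` is a non-negative selfadjoint extension of `V`, and `D(V)` is a
core for `W`. -/
def IsFriedrichsSqrt (V W : H →ₗ.[ℂ] H) : Prop :=
  IsSelfAdjoint W ∧ NonnegP W ∧
    (∃ T : H →ₗ.[ℂ] H, IsSqrtOf W T ∧ IsSelfAdjoint T ∧ NonnegP T ∧ V ≤ T) ∧
    (W.domRestrict V.domain).closure = W

/-- `W` is the square root of the Kreĭn–von Neumann extension of `V` (Ando–Nishio
characterization): `W` is a non-negative selfadjoint operator, `W ∘ W` is a non-negative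
selfadjoint extension of `V`, the domain of `W` consists exactly of those `h` with
`anSup V h < ∞`, and `‖W h‖² = anSup V h` there. -/
def IsKreinSqrt (V W : H →ₗ.[ℂ] H) : Prop :=
  IsSelfAdjoint W ∧ NonnegP W ∧
    (∃ T : H →ₗ.[ℂ] H, IsSqrtOf W T ∧ IsSelfAdjoint T ∧ NonnegP T ∧ V ≤ T) ∧
    (∀ h : H, h ∈ W.domain ↔ anSup V h < ⊤) ∧
    ∀ (h : H) (hh : h ∈ W.domain), ENNReal.ofReal (‖W ⟨h, hh⟩‖ ^ 2) = anSup V h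


private lemma sa_pair {H : Type*} [NormedAddCommGroup H] [InnerProductSpace ℂ H]
    [CompleteSpace H] {W : H →ₗ.[ℂ] H} (hW : IsSelfAdjoint W) :
    ∀ (x y : W.domain), @inner ℂ _ _ (W x) (y : H) = @inner ℂ _ _ (x : H) (W y) := by
  have hdense := hW.dense_domain
  have h := LinearPMap.adjoint_isFormalAdjoint (T := W) hdense
  rw [LinearPMap.isSelfAdjoint_def] at hW
  rw [hW] at h
  exact h

private lemma quad_sq_le {a b c : ℝ} (h : ∀ t : ℝ, 0 ≤ a * (t * t) + b * t + c) :
    b ^ 2 ≤ 4 * (a * c) := by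
  have := discrim_le_zero h
  rw [discrim] at this
  linarith

private lemma abs_le_add_of_sq_le {u a c : ℝ} (ha : 0 ≤ a) (hc : 0 ≤ c)
    (h : u ^ 2 ≤ 4 * (a * c)) : |u| ≤ a + c := by
  have h2 : u ^ 2 ≤ (a + c) ^ 2 := by nlinarith [sq_nonneg (a - c)]
  calc |u| = Real.sqrt (u ^ 2) := (Real.sqrt_sq_eq_abs u).symm
    _ ≤ Real.sqrt ((a + c) ^ 2) := Real.sqrt_le_sqrt h2
    _ = a + c := Real.sqrt_sq (by linarith)

open Complex in
private lemma abs_div_helper (u : ℂ) (hu : u ≠ 0) :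
    ((normSq (I * u) : ℝ) : ℂ) / ((‖u‖ : ℂ) * ‖u‖) = 1 := by
  have ha : (‖u‖ : ℂ) ≠ 0 := by simpa using norm_ne_zero_iff.2 hu
  rw [Complex.normSq_mul]
  simp only [Complex.normSq_I, one_mul]
  rw [Complex.normSq_eq_norm_sq]
  push_cast
  rw [sq]
  rw [div_self (by exact mul_ne_zero ha ha)]
private lemma mu_sq (t : ℝ) (u : ℂ) (hu : u ≠ 0) (z : ℂ) :
    ((starRingEnd ℂ) ((t : ℂ) * (starRingEnd ℂ) (I * u) / (‖u‖ : ℂ)) *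
      ((t : ℂ) * (starRingEnd ℂ) (I * u) / (‖u‖ : ℂ) * z)).re = z.re * (t * t) := by
  have hu' : (‖u‖ : ℂ) ≠ 0 := by simpa using norm_ne_zero_iff.2 hu
  have h1 : (starRingEnd ℂ) ((t : ℂ) * (starRingEnd ℂ) (I * u) / (‖u‖ : ℂ)) *
      ((t : ℂ) * (starRingEnd ℂ) (I * u) / (‖u‖ : ℂ) * z)
      = ((t : ℂ) * (t : ℂ)) * (((I * u) * (starRingEnd ℂ) (I * u)) / ((‖u‖ : ℂ) * ‖u‖)) * z := by
    simp only [map_div₀, map_mul, Complex.conj_ofReal, Complex.conj_conj]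
    field_simp
  rw [h1, Complex.mul_conj, abs_div_helper u hu, mul_one]
  push_cast
  rw [← Complex.ofReal_mul, Complex.re_ofReal_mul]
  ring
private lemma mu_lin (t : ℝ) (u : ℂ) (hu : u ≠ 0) :
    (I * ((t : ℂ) * (starRingEnd ℂ) (I * u) / (‖u‖ : ℂ) * u)).re = ‖u‖ * t := by
  have hu' : (‖u‖ : ℂ) ≠ 0 := by simpa using norm_ne_zero_iff.2 hu
  have h1 : I * ((t : ℂ) * (starRingEnd ℂ) (I * u) / (‖u‖ : ℂ) * u)
      = (t : ℂ) * ((((I * u) * (starRingEnd ℂ) (I * u)) / ((‖u‖ : ℂ) * ‖u‖)) * ‖u‖) := by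
    have hh : (((I * u) * (starRingEnd ℂ) (I * u)) / ((‖u‖ : ℂ) * ‖u‖)) * ‖u‖
        = ((I * u) * (starRingEnd ℂ) (I * u)) / (‖u‖ : ℂ) := by
      rw [div_mul_eq_mul_div]
      exact mul_div_mul_right _ _ hu'
    rw [hh]
    field_simp
  rw [h1, Complex.mul_conj, abs_div_helper u hu, one_mul]
  rw [← Complex.ofReal_mul, Complex.ofReal_re]
  ring

/-- If `L v = V_F φ_v` with `φ_v ∈ D(V_F)` for every `v ∈ 𝓥`, then
`A_{𝓥,L}` is dissipative iff `𝓥 ⊆ D(V_K^{1/2})` and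
`Im ⟪v, Ã* v⟫ + Im ⟪v, V_F φ_v⟫ ≥ ¼ ‖V_K^{1/2}(φ_v + 2iv)‖²` for all `v ∈ 𝓥`. -/
theorem statement10
    (A At V : H →ₗ.[ℂ] H) (D : Submodule ℂ H)
    (hAdense : Dense (A.domain : Set H)) (hAtdense : Dense (At.domain : Set H))
    (hAclosed : A.IsClosed) (hAtclosed : At.IsClosed)
    (hdual : A ≤ At.adjoint)
    (hDA : D ≤ A.domain) (hDAt : D ≤ At.domain)
    (hcoreA : (A.domRestrict D).closure = A)
    (hcoreAt : (At.domRestrict D).closure = At)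
    (hdiss : Dissipative A)
    (hVdom : V.domain = D)
    (hV : ∀ (x : H) (hxV : x ∈ V.domain) (hxA : x ∈ A.domain) (hxAt : x ∈ At.domain),
      V ⟨x, hxV⟩ = (2 * Complex.I)⁻¹ • (A ⟨x, hxA⟩ - At ⟨x, hxAt⟩))
    (𝓥 : Submodule ℂ H) (h𝓥 : 𝓥 ≤ At.adjoint.domain) (h𝓥A : 𝓥 ⊓ A.domain = ⊥)
    (L : 𝓥 →ₗ[ℂ] H)
    (WF WK : H →ₗ.[ℂ] H)
    (hWF : IsFriedrichsSqrt V WF) (hWK : IsKreinSqrt V WK)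
    (φ : 𝓥 → H)
    (hφ1 : ∀ v : 𝓥, φ v ∈ WF.domain)
    (hφ2 : ∀ v : 𝓥, WF ⟨φ v, hφ1 v⟩ ∈ WF.domain)
    (hφ3 : ∀ v : 𝓥, WF ⟨WF ⟨φ v, hφ1 v⟩, hφ2 v⟩ = L v) :
    (∀ (f : A.domain) (v : 𝓥) (hfv : (f : H) + (v : H) ∈ At.adjoint.domain),
      0 ≤ (⟪(f : H) + (v : H), At.adjoint ⟨(f : H) + (v : H), hfv⟩ + L v⟫).im) ↔
      ((∀ v : 𝓥, (v : H) ∈ WK.domain) ∧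
        ∀ (v : 𝓥) (hv : (v : H) ∈ At.adjoint.domain)
          (hm : φ v + (2 * Complex.I) • (v : H) ∈ WK.domain),
          (1 / 4) * ‖WK ⟨φ v + (2 * Complex.I) • (v : H), hm⟩‖ ^ 2
            ≤ (⟪(v : H), At.adjoint ⟨(v : H), hv⟩⟫).im + (⟪(v : H), L v⟫).im) := by
  -- unpack the structural hypotheses
  obtain ⟨hWFsa, hWFnn, ⟨T, hsqT, hTsa, hTnn, hVT⟩, hWFcore⟩ := hWF
  obtain ⟨hWKsa, hWKnn, -, hWKdom, hWKnorm⟩ := hWK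
  -- basic membership helpers
  have hxD : ∀ x : V.domain, (x : H) ∈ D := fun x => hVdom ▸ x.2
  have hxA : ∀ x : V.domain, (x : H) ∈ A.domain := fun x => hDA (hxD x)
  have hxAt : ∀ x : V.domain, (x : H) ∈ At.domain := fun x => hDAt (hxD x)
  have hxAdj : ∀ x : V.domain, (x : H) ∈ At.adjoint.domain := fun x => hdual.1 (hxA x)
  have hpair : ∀ (y : At.adjoint.domain) (x : At.domain),
      ⟪At.adjoint y, (x : H)⟫ = ⟪(y : H), At x⟫ :=
    LinearPMap.adjoint_isFormalAdjoint hAtdense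
  have hAeqAdj : ∀ (x : H) (hA : x ∈ A.domain) (hAdj : x ∈ At.adjoint.domain),
      At.adjoint ⟨x, hAdj⟩ = A ⟨x, hA⟩ := fun x hA hAdj =>
    (hdual.2 (x := ⟨x, hA⟩) (y := ⟨x, hAdj⟩) rfl).symm
  have hAVAt : ∀ x : V.domain,
      A ⟨(x : H), hxA x⟩ = At ⟨(x : H), hxAt x⟩ + (2 * I) • V x := by
    intro x
    have h2 : (2 * I : ℂ) ≠ 0 := by simp [Complex.I_ne_zero]
    have := hV (x : H) x.2 (hxA x) (hxAt x)
    have hx : x = (⟨(x : H), x.2⟩ : V.domain) := rfl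
    rw [hx, this, smul_inv_smul₀ h2]
    abel
  -- domains of T and WF
  have hφT : ∀ v : 𝓥, φ v ∈ T.domain := fun v => (hsqT.1 _).2 ⟨hφ1 v, hφ2 v⟩
  have hLT : ∀ v : 𝓥, T ⟨φ v, hφT v⟩ = L v := fun v => by
    rw [hsqT.2 (φ v) (hφT v) (hφ1 v) (hφ2 v)]; exact hφ3 v
  have hxT : ∀ x : V.domain, (x : H) ∈ T.domain := fun x => hVT.1 x.2
  have hVxT : ∀ x : V.domain, T ⟨(x : H), hxT x⟩ = V x := fun x =>
    (hVT.2 (x := x) (y := ⟨(x : H), hxT x⟩) rfl).symm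
  have hxW : ∀ x : V.domain, (x : H) ∈ WF.domain := by
    intro x
    obtain ⟨h1, -⟩ := (hsqT.1 (x : H)).1 (hxT x)
    exact h1
  -- the form of V through A
  have hxWW : ∀ x : V.domain, WF ⟨(x : H), hxW x⟩ ∈ WF.domain := by
    intro x
    obtain ⟨h1, h2⟩ := (hsqT.1 (x : H)).1 (hxT x)
    exact h2
  have formV : ∀ x : V.domain,
      ⟪(x : H), V x⟫ = ((⟪(x : H), A ⟨(x : H), hxA x⟩⟫).im : ℂ) := by
    intro x
    have hz : ⟪(x : H), At ⟨(x : H), hxAt x⟩⟫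
        = (starRingEnd ℂ) ⟪(x : H), A ⟨(x : H), hxA x⟩⟫ := by
      rw [← hpair ⟨(x : H), hxAdj x⟩ ⟨(x : H), hxAt x⟩, hAeqAdj _ (hxA x) (hxAdj x),
        inner_conj_symm]
    have hx0 : V x = (2 * I)⁻¹ • (A ⟨(x : H), hxA x⟩ - At ⟨(x : H), hxAt x⟩) :=
      hV (x : H) x.2 (hxA x) (hxAt x)
    rw [hx0, inner_smul_right, inner_sub_right, hz, Complex.sub_conj]
    have h2 : (2 * I : ℂ) ≠ 0 := by simp [Complex.I_ne_zero]
    field_simp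
    push_cast
    ring
  -- the form of V through WF
  have hVre0 : ∀ x : V.domain, 0 ≤ (⟪(x : H), V x⟫).re := by
    intro x
    rw [formV x]
    simpa using hdiss ⟨(x : H), hxA x⟩
  -- ⟪h, V x⟫ through WF
  have hWpair : ∀ (h : H) (hh : h ∈ WF.domain) (x : V.domain),
      ⟪h, V x⟫ = ⟪WF ⟨h, hh⟩, WF ⟨(x : H), hxW x⟩⟫ := by
    intro h hh x
    have h1 : V x = T ⟨(x : H), hxT x⟩ := (hVxT x).symm
    rw [h1, hsqT.2 (x : H) (hxT x) (hxW x) (hxWW x)]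
    exact (sa_pair hWFsa ⟨h, hh⟩ ⟨WF ⟨(x : H), hxW x⟩, hxWW x⟩).symm
  have formW : ∀ x : V.domain,
      (⟪(x : H), V x⟫).re = ‖WF ⟨(x : H), hxW x⟩‖ ^ 2 := by
    intro x
    rw [hWpair (x : H) (hxW x) x, inner_self_eq_norm_sq_to_K]
    norm_cast
  -- every element of D(WF) is in D(WK)
  have hVne : ∀ x : V.domain, V x ≠ 0 → WF ⟨(x : H), hxW x⟩ ≠ 0 := by
    intro x hx0 hW0
    apply hx0
    rw [← hVxT x, hsqT.2 (x : H) (hxT x) (hxW x) (hxWW x)]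
    have : (⟨WF ⟨(x : H), hxW x⟩, hxWW x⟩ : WF.domain) = 0 := by
      exact Subtype.ext hW0
    rw [this, LinearPMap.map_zero]
  have hWFK : ∀ (h : H), h ∈ WF.domain → h ∈ WK.domain := by
    intro h hh
    rw [hWKdom]
    have hb : anSup V h ≤ ENNReal.ofReal (‖WF ⟨h, hh⟩‖ ^ 2) := by
      rw [anSup]
      refine iSup_le fun x => ?_
      obtain ⟨x, hx0⟩ := x
      have hW0 : WF ⟨(x : H), hxW x⟩ ≠ 0 := hVne x hx0
      refine ENNReal.div_le_of_le_mul ?_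
      rw [← ENNReal.ofReal_mul (by positivity)]
      apply ENNReal.ofReal_le_ofReal
      rw [hWpair h hh x, formW x]
      calc ‖⟪WF ⟨h, hh⟩, WF ⟨(x : H), hxW x⟩⟫‖ ^ 2
          ≤ (‖WF ⟨h, hh⟩‖ * ‖WF ⟨(x : H), hxW x⟩‖) ^ 2 := by
            have := norm_inner_le_norm (𝕜 := ℂ) (WF ⟨h, hh⟩) (WF ⟨(x : H), hxW x⟩)
            exact pow_le_pow_left₀ (norm_nonneg _) this 2
        _ = ‖WF ⟨h, hh⟩‖ ^ 2 * ‖WF ⟨(x : H), hxW x⟩‖ ^ 2 := by ring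
    exact lt_of_le_of_lt hb ENNReal.ofReal_lt_top
  have hφK : ∀ v : 𝓥, φ v ∈ WK.domain := fun v => hWFK _ (hφ1 v)
  -- the key algebraic identity on the common core
  have keyid : ∀ (v : 𝓥) (x : V.domain),
      (⟪(x : H) + (v : H), A ⟨(x : H), hxA x⟩ + (At.adjoint ⟨(v : H), h𝓥 v.2⟩ + L v)⟫).im
      = (⟪(x : H), V x⟫).re + (I * ⟪φ v + (2 * I) • (v : H), V x⟫).re
        + ((⟪(v : H), At.adjoint ⟨(v : H), h𝓥 v.2⟩⟫).im + (⟪(v : H), L v⟫).im) := by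
    intro v x
    have e1 := hAVAt x
    have e2 : ⟪(v : H), At ⟨(x : H), hxAt x⟩⟫
        = (starRingEnd ℂ) ⟪(x : H), At.adjoint ⟨(v : H), h𝓥 v.2⟩⟫ := by
      rw [← hpair ⟨(v : H), h𝓥 v.2⟩ ⟨(x : H), hxAt x⟩]
      exact (inner_conj_symm _ _).symm
    have e3 : ⟪(x : H), L v⟫ = (starRingEnd ℂ) ⟪φ v, V x⟫ := by
      rw [← hLT v, ← hVxT x, ← inner_conj_symm]
      congr 1
      exact sa_pair hTsa ⟨φ v, hφT v⟩ ⟨(x : H), hxT x⟩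
    have e4 : (⟪(x : H), V x⟫).re = (⟪(x : H), A ⟨(x : H), hxA x⟩⟫).im := by
      rw [formV x]; exact Complex.ofReal_re _
    have hVim : (⟪(x : H), V x⟫).im = 0 := by
      rw [formV x]; exact Complex.ofReal_im _
    have e5 : (⟪(x : H), At ⟨(x : H), hxAt x⟩⟫).im = -(⟪(x : H), V x⟫).re := by
      have hz : ⟪(x : H), At ⟨(x : H), hxAt x⟩⟫
          = (starRingEnd ℂ) ⟪(x : H), A ⟨(x : H), hxA x⟩⟫ := by
        rw [← hpair ⟨(x : H), hxAdj x⟩ ⟨(x : H), hxAt x⟩, hAeqAdj _ (hxA x) (hxAdj x),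
          inner_conj_symm]
      rw [hz, Complex.conj_im, e4]
    rw [e1]
    simp only [inner_add_left, inner_add_right, inner_smul_left, inner_smul_right,
      e2, e3]
    simp only [Complex.add_im, Complex.add_re, Complex.mul_im, Complex.mul_re,
      Complex.conj_re, Complex.conj_im, Complex.I_re, Complex.I_im, Complex.ofReal_re,
      Complex.ofReal_im, map_mul, Complex.conj_I, Complex.conj_ofNat, Complex.re_ofNat,
      Complex.im_ofNat, Complex.neg_re, Complex.neg_im, e5, hVim]
    ring
  -- conversion between the two shapes of the dissipativity functional
  have hEconv : ∀ (x : H) (hA : x ∈ A.domain) (v : 𝓥)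
      (hfv : x + (v : H) ∈ At.adjoint.domain),
      At.adjoint ⟨x + (v : H), hfv⟩ + L v
        = A ⟨x, hA⟩ + (At.adjoint ⟨(v : H), h𝓥 v.2⟩ + L v) := by
    intro x hA v hfv
    have hsum : (⟨x + (v : H), hfv⟩ : At.adjoint.domain)
        = ⟨x, hdual.1 hA⟩ + ⟨(v : H), h𝓥 v.2⟩ := rfl
    rw [hsum, At.adjoint.map_add, hAeqAdj x hA (hdual.1 hA), add_assoc]
  constructor
  · -- forward direction
    intro hdisp
    -- the constant term is non-negative
    have hc0 : ∀ v : 𝓥,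
        0 ≤ (⟪(v : H), At.adjoint ⟨(v : H), h𝓥 v.2⟩⟫).im + (⟪(v : H), L v⟫).im := by
      intro v
      have h0 : ((0 : A.domain) : H) + (v : H) ∈ At.adjoint.domain := by
        simpa using h𝓥 v.2
      have h1 := hdisp 0 v h0
      have h2 : (⟨((0 : A.domain) : H) + (v : H), h0⟩ : At.adjoint.domain)
          = ⟨(v : H), h𝓥 v.2⟩ := Subtype.ext (by simp)
      rw [h2] at h1
      simpa [inner_add_right] using h1
    -- the quadratic bound from dissipativity
    have hquad : ∀ (v : 𝓥) (x : V.domain) (t : ℝ),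
        0 ≤ (⟪(x : H), V x⟫).re * (t * t) + ‖⟪φ v + (2 * I) • (v : H), V x⟫‖ * t
          + ((⟪(v : H), At.adjoint ⟨(v : H), h𝓥 v.2⟩⟫).im + (⟪(v : H), L v⟫).im) := by
      intro v x t
      by_cases hu : ⟪φ v + (2 * I) • (v : H), V x⟫ = 0
      · have h1 := hVre0 x
        have h2 := hc0 v
        rw [hu]
        simp only [norm_zero, zero_mul]
        nlinarith [mul_self_nonneg t]
      · set u := ⟪φ v + (2 * I) • (v : H), V x⟫ with hudef
        set μ : ℂ := (t : ℂ) * (starRingEnd ℂ) (I * u) / (‖u‖ : ℂ) with hμdef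
        set x' : V.domain := μ • x with hx'def
        have hfv' : (x' : H) + (v : H) ∈ At.adjoint.domain :=
          Submodule.add_mem _ (hdual.1 (hxA x')) (h𝓥 v.2)
        have h2 := hdisp ⟨(x' : H), hxA x'⟩ v hfv'
        rw [hEconv (x' : H) (hxA x') v hfv'] at h2
        rw [keyid v x'] at h2
        have hVx' : V x' = μ • V x := V.map_smul μ x
        have hxc : (x' : H) = μ • (x : H) := rfl
        have e6 : ⟪(x' : H), V x'⟫ = (starRingEnd ℂ) μ * (μ * ⟪(x : H), V x⟫) := by
          rw [hVx', hxc, inner_smul_left, inner_smul_right]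
        have e7 : (⟪(x' : H), V x'⟫).re = (⟪(x : H), V x⟫).re * (t * t) := by
          rw [e6, hμdef]
          exact mu_sq t u hu _
        have e8 : ⟪φ v + (2 * I) • (v : H), V x'⟫ = μ * u := by
          rw [hVx', inner_smul_right]
        have e9 : (I * ⟪φ v + (2 * I) • (v : H), V x'⟫).re = ‖u‖ * t := by
          rw [e8, hμdef]
          exact mu_lin t u hu
        rw [e7, e9] at h2
        linarith
    -- hence the Ando–Nishio supremum is finite
    have hsup : ∀ v : 𝓥, anSup V (φ v + (2 * I) • (v : H))
        ≤ ENNReal.ofReal (4 * ((⟪(v : H), At.adjoint ⟨(v : H), h𝓥 v.2⟩⟫).im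
          + (⟪(v : H), L v⟫).im)) := by
      intro v
      rw [anSup]
      refine iSup_le ?_
      rintro ⟨x, hx0⟩
      have hq := quad_sq_le (fun t => hquad v x t)
      have ha := hVre0 x
      have hc := hc0 v
      by_cases haz : (⟪(x : H), V x⟫).re = 0
      · have h1 : ‖⟪φ v + (2 * I) • (v : H), V x⟫‖ ^ 2 ≤ 0 := by
          rw [haz] at hq; linarith
        rw [ENNReal.ofReal_eq_zero.2 h1, ENNReal.zero_div]
        exact bot_le
      · refine ENNReal.div_le_of_le_mul ?_
        rw [← ENNReal.ofReal_mul (by linarith)]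
        apply ENNReal.ofReal_le_ofReal
        nlinarith
    have hwK : ∀ v : 𝓥, φ v + (2 * I) • (v : H) ∈ WK.domain := fun v =>
      (hWKdom _).2 (lt_of_le_of_lt (hsup v) ENNReal.ofReal_lt_top)
    have hvK : ∀ v : 𝓥, (v : H) ∈ WK.domain := by
      intro v
      have h1 : ((2 * I)⁻¹ : ℂ) • ((φ v + (2 * I) • (v : H)) - φ v) = (v : H) := by
        have h2 : (2 * I : ℂ) ≠ 0 := by simp [Complex.I_ne_zero]
        rw [add_sub_cancel_left, inv_smul_smul₀ h2]
      rw [← h1]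
      exact Submodule.smul_mem _ _ (Submodule.sub_mem _ (hwK v) (hφK v))
    refine ⟨hvK, ?_⟩
    intro v hv hm
    have hrfl : At.adjoint ⟨(v : H), hv⟩ = At.adjoint ⟨(v : H), h𝓥 v.2⟩ := rfl
    rw [hrfl]
    have h1 := hWKnorm _ hm
    have h2 : ENNReal.ofReal (‖WK ⟨φ v + (2 * I) • (v : H), hm⟩‖ ^ 2)
        ≤ ENNReal.ofReal (4 * ((⟪(v : H), At.adjoint ⟨(v : H), h𝓥 v.2⟩⟫).im
          + (⟪(v : H), L v⟫).im)) := by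
      rw [h1]; exact hsup v
    have h3 : ‖WK ⟨φ v + (2 * I) • (v : H), hm⟩‖ ^ 2
        ≤ 4 * ((⟪(v : H), At.adjoint ⟨(v : H), h𝓥 v.2⟩⟫).im + (⟪(v : H), L v⟫).im) := by
      have hc := hc0 v
      exact (ENNReal.ofReal_le_ofReal_iff (by linarith)).1 h2
    linarith
  · -- backward direction
    rintro ⟨hvK, hineq⟩ f v hfv
    have hm : φ v + (2 * I) • (v : H) ∈ WK.domain :=
      Submodule.add_mem _ (hφK v) (Submodule.smul_mem _ _ (hvK v))
    have hcge : (1 / 4) * ‖WK ⟨φ v + (2 * I) • (v : H), hm⟩‖ ^ 2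
        ≤ (⟪(v : H), At.adjoint ⟨(v : H), h𝓥 v.2⟩⟫).im + (⟪(v : H), L v⟫).im :=
      hineq v (h𝓥 v.2) hm
    have hc0' : 0 ≤ (⟪(v : H), At.adjoint ⟨(v : H), h𝓥 v.2⟩⟫).im + (⟪(v : H), L v⟫).im :=
      le_trans (by positivity) hcge
    have hub : anSup V (φ v + (2 * I) • (v : H))
        ≤ ENNReal.ofReal (4 * ((⟪(v : H), At.adjoint ⟨(v : H), h𝓥 v.2⟩⟫).im
          + (⟪(v : H), L v⟫).im)) := by
      rw [← hWKnorm _ hm]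
      exact ENNReal.ofReal_le_ofReal (by linarith)
    -- first establish the inequality on the common core
    have hD0 : ∀ x : V.domain,
        0 ≤ (⟪(x : H) + (v : H), A ⟨(x : H), hxA x⟩
          + (At.adjoint ⟨(v : H), h𝓥 v.2⟩ + L v)⟫).im := by
      intro x
      rw [keyid v x]
      by_cases hx0 : V x = 0
      · have h1 : ⟪(x : H), V x⟫ = 0 := by rw [hx0, inner_zero_right]
        have h2 : ⟪φ v + (2 * I) • (v : H), V x⟫ = 0 := by rw [hx0, inner_zero_right]
        rw [h1, h2]
        simpa using hc0'
      · have hterm : ENNReal.ofReal (‖⟪φ v + (2 * I) • (v : H), V x⟫‖ ^ 2)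
            / ENNReal.ofReal ((⟪(x : H), V x⟫).re)
            ≤ anSup V (φ v + (2 * I) • (v : H)) := by
          rw [anSup]
          exact le_iSup (fun (f : {f : V.domain // V f ≠ 0}) =>
            ENNReal.ofReal (‖⟪φ v + (2 * I) • (v : H), V f.1⟫‖ ^ 2)
              / ENNReal.ofReal ((⟪(f.1 : H), V f.1⟫).re)) ⟨x, hx0⟩
        have hchain := le_trans hterm hub
        have ha := hVre0 x
        by_cases haz : (⟪(x : H), V x⟫).re = 0
        · -- the numerator must vanish
          have hu0 : ⟪φ v + (2 * I) • (v : H), V x⟫ = 0 := by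
            by_contra hu0
            have hn : ENNReal.ofReal (‖⟪φ v + (2 * I) • (v : H), V x⟫‖ ^ 2) ≠ 0 := by
              rw [ne_eq, ENNReal.ofReal_eq_zero, not_le]
              have : ‖⟪φ v + (2 * I) • (v : H), V x⟫‖ ≠ 0 := norm_ne_zero_iff.2 hu0
              positivity
            rw [haz, ENNReal.ofReal_zero, ENNReal.div_zero hn] at hchain
            exact (ENNReal.ofReal_lt_top.not_ge hchain).elim
          rw [haz, hu0]
          simpa using hc0'
        · have hapos : 0 < (⟪(x : H), V x⟫).re := lt_of_le_of_ne ha (Ne.symm haz)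
          have h4 : ENNReal.ofReal (‖⟪φ v + (2 * I) • (v : H), V x⟫‖ ^ 2)
              ≤ ENNReal.ofReal (4 * ((⟪(v : H), At.adjoint ⟨(v : H), h𝓥 v.2⟩⟫).im
                  + (⟪(v : H), L v⟫).im)) * ENNReal.ofReal ((⟪(x : H), V x⟫).re) := by
            have := mul_le_mul_left hchain (ENNReal.ofReal ((⟪(x : H), V x⟫).re))
            rwa [ENNReal.div_mul_cancel (by simpa [ENNReal.ofReal_eq_zero, not_le] using hapos)
              ENNReal.ofReal_ne_top] at this
          rw [← ENNReal.ofReal_mul (by linarith)] at h4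
          have h5 : ‖⟪φ v + (2 * I) • (v : H), V x⟫‖ ^ 2
              ≤ 4 * (((⟪(x : H), V x⟫).re) * ((⟪(v : H), At.adjoint ⟨(v : H), h𝓥 v.2⟩⟫).im
                  + (⟪(v : H), L v⟫).im)) := by
            have := (ENNReal.ofReal_le_ofReal_iff (by positivity)).1 h4
            linarith
          have h6 : ‖⟪φ v + (2 * I) • (v : H), V x⟫‖
              ≤ (⟪(x : H), V x⟫).re + ((⟪(v : H), At.adjoint ⟨(v : H), h𝓥 v.2⟩⟫).im
                  + (⟪(v : H), L v⟫).im) := by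
            have h7 := abs_le_add_of_sq_le ha hc0' (by simpa [abs_norm] using h5)
            simpa [abs_norm] using h7
          have h8 : |(I * ⟪φ v + (2 * I) • (v : H), V x⟫).re|
              ≤ ‖⟪φ v + (2 * I) • (v : H), V x⟫‖ := by
            calc |(I * ⟪φ v + (2 * I) • (v : H), V x⟫).re|
                ≤ ‖I * ⟪φ v + (2 * I) • (v : H), V x⟫‖ := Complex.abs_re_le_norm _
              _ = ‖⟪φ v + (2 * I) • (v : H), V x⟫‖ := by
                  rw [norm_mul, Complex.norm_I, one_mul]
          have h9 := neg_abs_le ((I * ⟪φ v + (2 * I) • (v : H), V x⟫).re)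
          linarith
    -- now extend to all of D(A) by the closedness of A and the core property
    have hclosable : (A.domRestrict D).IsClosable :=
      hAclosed.isClosable.leIsClosable LinearPMap.domRestrict_le
    have hgr : A.graph = ((A.domRestrict D).graph).topologicalClosure := by
      rw [hclosable.graph_closure_eq_closure_graph, hcoreA]
    have hcont : Continuous fun p : H × H =>
        (⟪p.1 + (v : H), p.2 + (At.adjoint ⟨(v : H), h𝓥 v.2⟩ + L v)⟫).im :=
      Complex.continuous_im.comp ((continuous_fst.add continuous_const).inner
        (continuous_snd.add continuous_const))
    have hset : IsClosed {p : H × H | 0 ≤ (⟪p.1 + (v : H),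
        p.2 + (At.adjoint ⟨(v : H), h𝓥 v.2⟩ + L v)⟫).im} :=
      isClosed_le continuous_const hcont
    have hsub : ((A.domRestrict D).graph : Set (H × H)) ⊆ {p : H × H | 0 ≤ (⟪p.1 + (v : H),
        p.2 + (At.adjoint ⟨(v : H), h𝓥 v.2⟩ + L v)⟫).im} := by
      rintro ⟨p1, p2⟩ hp
      rw [SetLike.mem_coe, LinearPMap.mem_graph_iff] at hp
      obtain ⟨y, hy1, hy2⟩ := hp
      have hyD : (y : H) ∈ D := y.2.1
      have hyV : (y : H) ∈ V.domain := hVdom ▸ hyD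
      have happ : (A.domRestrict D) y = A ⟨(y : H), hDA hyD⟩ :=
        LinearPMap.domRestrict_apply rfl
      have := hD0 ⟨(y : H), hyV⟩
      simp only [Set.mem_setOf_eq]
      have hy1' : (y : H) = p1 := hy1
      have hy2' : (A.domRestrict D) y = p2 := hy2
      rw [← hy1', ← hy2', happ]
      exact this
    have hmemA : ((f : H), A f) ∈ (A.graph : Set (H × H)) := A.mem_graph f
    rw [hgr] at hmemA
    have hmem2 : ((f : H), A f) ∈ {p : H × H | 0 ≤ (⟪p.1 + (v : H),
        p.2 + (At.adjoint ⟨(v : H), h𝓥 v.2⟩ + L v)⟫).im} := by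
      have hcc : (((A.domRestrict D).graph).topologicalClosure : Set (H × H))
          ⊆ {p : H × H | 0 ≤ (⟪p.1 + (v : H),
            p.2 + (At.adjoint ⟨(v : H), h𝓥 v.2⟩ + L v)⟫).im} := by
        rw [Submodule.topologicalClosure_coe]
        exact closure_minimal hsub hset
      exact hcc hmemA
    rw [hEconv (f : H) f.2 v hfv]
    exact hmem2
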